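/- Let 𝒜 be an uncountable almost disjoint family of infinite subsets of ℕ and let K_𝒜 be the associated Mrówka space with isolated points {x_n : n ∈ ℕ} and points {y_A : A ∈ 𝒜}. Suppose T : C_0(K_𝒜) → ℓ_∞ is a bounded operator with T(1_{{x_n}}) = 0 for all n. Then 𝒜 contains a subfamily 𝒜' with |𝒜'| = |𝒜| such that T(1_{U(A,F)}) = 0 for every A ∈ 𝒜' and every finite F ⊆ ℕ, where U(A,F) = {x_n : n ∈ A \ F} ∪ {y_A}. -/

import Mathlib

open Cardinal Set

/-- The underlying set of the Mrówka space associated with an almost disjoint family `𝒜`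
of subsets of `ℕ`: the isolated points `x_n` are `Sum.inl n` and the points `y_A` are
`Sum.inr A`. -/
def Mrowka (𝒜 : Set (Set ℕ)) : Type := ℕ ⊕ ↥𝒜

/-- The basic neighbourhood `U(A, F) = {x_n : n ∈ A \ F} ∪ {y_A}` of the point `y_A`. -/
def mrowkaNbhd {𝒜 : Set (Set ℕ)} (A : ↥𝒜) (F : Finset ℕ) : Set (Mrowka 𝒜) :=
  (Sum.inl '' ((A : Set ℕ) \ (F : Set ℕ))) ∪ {Sum.inr A}

/-- The Mrówka topology: points `x_n` are isolated and the sets `U(A, F)` form a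
neighbourhood basis at `y_A`. -/
instance (𝒜 : Set (Set ℕ)) : TopologicalSpace (Mrowka 𝒜) :=
  TopologicalSpace.generateFrom
    ({s | ∃ n : ℕ, s = {Sum.inl n}} ∪ {s | ∃ (A : ↥𝒜) (F : Finset ℕ), s = mrowkaNbhd A F})

/-- An almost disjoint family of infinite subsets of `ℕ`. -/
def ADFamily (𝒜 : Set (Set ℕ)) : Prop :=
  (∀ A ∈ 𝒜, A.Infinite) ∧ ∀ A ∈ 𝒜, ∀ B ∈ 𝒜, A ≠ B → (A ∩ B).Finite

open ZeroAtInfty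

namespace MrowkaAux

variable {𝒜 : Set (Set ℕ)}

lemma mem_nbhd_inl {A : ↥𝒜} {F : Finset ℕ} {m : ℕ} :
    (Sum.inl m : Mrowka 𝒜) ∈ mrowkaNbhd A F ↔ m ∈ (A : Set ℕ) ∧ m ∉ F := by
  show Sum.inl m ∈ (Sum.inl '' ((A : Set ℕ) \ (F : Set ℕ)) ∪ {Sum.inr A} : Set (ℕ ⊕ ↥𝒜)) ↔ _
  simp

lemma mem_nbhd_inr {A B : ↥𝒜} {F : Finset ℕ} :
    (Sum.inr B : Mrowka 𝒜) ∈ mrowkaNbhd A F ↔ B = A := by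
  show Sum.inr B ∈ (Sum.inl '' ((A : Set ℕ) \ (F : Set ℕ)) ∪ {Sum.inr A} : Set (ℕ ⊕ ↥𝒜)) ↔ _
  simp

lemma isOpen_inl (n : ℕ) : IsOpen ({Sum.inl n} : Set (Mrowka 𝒜)) :=
  TopologicalSpace.GenerateOpen.basic _ (Or.inl ⟨n, rfl⟩)

lemma isOpen_nbhd (A : ↥𝒜) (F : Finset ℕ) : IsOpen (mrowkaNbhd A F) :=
  TopologicalSpace.GenerateOpen.basic _ (Or.inr ⟨A, F, rfl⟩)

lemma isClosed_inl (n : ℕ) : IsClosed ({Sum.inl n} : Set (Mrowka 𝒜)) := by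
  rw [← isOpen_compl_iff, isOpen_iff_forall_mem_open]
  intro x hx
  cases x with
  | inl m =>
    refine ⟨{Sum.inl m}, ?_, isOpen_inl m, rfl⟩
    intro y hy
    erw [mem_singleton_iff] at hy
    subst hy
    exact hx
  | inr B =>
    refine ⟨mrowkaNbhd B {n}, ?_, isOpen_nbhd B {n}, mem_nbhd_inr.2 rfl⟩
    rintro y hy
    cases y with
    | inl m =>
      rcases mem_nbhd_inl.1 hy with ⟨-, hm⟩
      simp only [Finset.mem_singleton] at hm
      erw [mem_compl_iff, mem_singleton_iff]
      exact fun h => hm (Sum.inl.injEq .. ▸ h)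
    | inr C => intro h; cases h

lemma isClopen_inl (n : ℕ) : IsClopen ({Sum.inl n} : Set (Mrowka 𝒜)) :=
  ⟨isClosed_inl n, isOpen_inl n⟩

/-- The indicator of an isolated point as an element of `C₀`. -/
noncomputable def hfn (𝒜 : Set (Set ℕ)) (n : ℕ) : C₀(Mrowka 𝒜, ℝ) where
  toFun := Set.indicator {Sum.inl n} (1 : Mrowka 𝒜 → ℝ)
  continuous_toFun := by
    classical
    rw [← Set.piecewise_eq_indicator]
    exact continuous_const.piecewise (by simp [(isClopen_inl (𝒜 := 𝒜) n).frontier_eq]) continuous_const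
  zero_at_infty' := by
    have h : ∀ᶠ x in Filter.cocompact (Mrowka 𝒜),
        Set.indicator {Sum.inl n} (1 : Mrowka 𝒜 → ℝ) x = 0 := by
      refine Filter.mem_of_superset
        (Filter.mem_cocompact.2 ⟨{Sum.inl n}, isCompact_singleton, subset_rfl⟩) ?_
      intro x hx
      exact Set.indicator_of_notMem hx _
    exact Filter.Tendsto.congr' (h.mono fun x hx => hx.symm) tendsto_const_nhds

@[simp] lemma hfn_coe (n : ℕ) : ⇑(hfn 𝒜 n) = Set.indicator {Sum.inl n} (1 : Mrowka 𝒜 → ℝ) := rfl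


variable {𝒜 : Set (Set ℕ)}

lemma c0_coe_sum {ι : Type*} (s : Finset ι) (f : ι → C₀(Mrowka 𝒜, ℝ)) :
    ⇑(∑ i ∈ s, f i) = ∑ i ∈ s, ⇑(f i) := by
  induction s using Finset.cons_induction with
  | empty => simp
  | cons a s ha ih => simp [Finset.sum_cons, ih]

open scoped Classical in
/-- Pointwise decomposition : `1_{U(A,∅)} = 1_{U(A,F)} + ∑_{n ∈ A ∩ F} 1_{x_n}`. -/
lemma indicator_decomp (A : ↥𝒜) (F : Finset ℕ) :
    Set.indicator (mrowkaNbhd A ∅) (1 : Mrowka 𝒜 → ℝ) =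
      Set.indicator (mrowkaNbhd A F) (1 : Mrowka 𝒜 → ℝ) +
        ∑ n ∈ F.filter (fun n => n ∈ (A : Set ℕ)),
          Set.indicator ({Sum.inl n} : Set (Mrowka 𝒜)) (1 : Mrowka 𝒜 → ℝ) := by
  funext x
  have hsum : (∑ n ∈ F.filter (fun n => n ∈ (A : Set ℕ)),
      Set.indicator ({Sum.inl n} : Set (Mrowka 𝒜)) (1 : Mrowka 𝒜 → ℝ)) x
      = ∑ n ∈ F.filter (fun n => n ∈ (A : Set ℕ)),
        Set.indicator ({Sum.inl n} : Set (Mrowka 𝒜)) (1 : Mrowka 𝒜 → ℝ) x := by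
    simp [Finset.sum_apply]
  rw [Pi.add_apply, hsum]
  cases x with
  | inl m =>
    by_cases hmA : m ∈ (A : Set ℕ)
    · by_cases hmF : m ∈ F
      · have h1 : (Sum.inl m : Mrowka 𝒜) ∈ mrowkaNbhd A ∅ := mem_nbhd_inl.2 ⟨hmA, by simp⟩
        have h2 : (Sum.inl m : Mrowka 𝒜) ∉ mrowkaNbhd A F := by
          intro h; exact (mem_nbhd_inl.1 h).2 hmF
        erw [Set.indicator_of_mem h1, Set.indicator_of_notMem h2]
        rw [Finset.sum_eq_single_of_mem m (by simp [hmF, hmA])]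
        · erw [zero_add, Set.indicator_of_mem (Set.mem_singleton _)]
        · intro b _ hb
          refine Set.indicator_of_notMem ?_ _
          erw [mem_singleton_iff]
          exact fun h => hb (Sum.inl_injective h).symm
      · have h1 : (Sum.inl m : Mrowka 𝒜) ∈ mrowkaNbhd A ∅ := mem_nbhd_inl.2 ⟨hmA, by simp⟩
        have h2 : (Sum.inl m : Mrowka 𝒜) ∈ mrowkaNbhd A F := mem_nbhd_inl.2 ⟨hmA, hmF⟩
        erw [Set.indicator_of_mem h1, Set.indicator_of_mem h2]
        rw [Finset.sum_eq_zero, add_zero]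
        intro b hb
        refine Set.indicator_of_notMem ?_ _
        simp only [Finset.mem_filter] at hb
        erw [mem_singleton_iff]
        intro h; cases Sum.inl_injective h; exact hmF hb.1
    · have h1 : (Sum.inl m : Mrowka 𝒜) ∉ mrowkaNbhd A ∅ := fun h => hmA (mem_nbhd_inl.1 h).1
      have h2 : (Sum.inl m : Mrowka 𝒜) ∉ mrowkaNbhd A F := fun h => hmA (mem_nbhd_inl.1 h).1
      erw [Set.indicator_of_notMem h1, Set.indicator_of_notMem h2]
      rw [Finset.sum_eq_zero, add_zero]
      intro b hb
      refine Set.indicator_of_notMem ?_ _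
      simp only [Finset.mem_filter] at hb
      erw [mem_singleton_iff]
      intro h; cases Sum.inl_injective h; exact hmA hb.2
  | inr B =>
    have h1 : (Sum.inr B : Mrowka 𝒜) ∈ mrowkaNbhd A ∅ ↔ B = A := mem_nbhd_inr
    have h2 : (Sum.inr B : Mrowka 𝒜) ∈ mrowkaNbhd A F ↔ B = A := mem_nbhd_inr
    have h3 : (∑ n ∈ F.filter (fun n => n ∈ (A : Set ℕ)),
        Set.indicator ({Sum.inl n} : Set (Mrowka 𝒜)) (1 : Mrowka 𝒜 → ℝ) (Sum.inr B)) = 0 :=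
      Finset.sum_eq_zero fun b _ => Set.indicator_of_notMem (fun h => by cases h) _
    rw [h3, add_zero]
    by_cases hBA : B = A
    · erw [Set.indicator_of_mem (h1.2 hBA), Set.indicator_of_mem (h2.2 hBA)]
    · erw [Set.indicator_of_notMem (fun h => hBA (h1.1 h)),
        Set.indicator_of_notMem (fun h => hBA (h2.1 h))]

variable (T : C₀(Mrowka 𝒜, ℝ) →L[ℝ] lp (fun _ : ℕ => ℝ) ⊤)
variable (hker : ∀ (n : ℕ) (f : C₀(Mrowka 𝒜, ℝ)),
      ⇑f = Set.indicator {Sum.inl n} (1 : Mrowka 𝒜 → ℝ) → T f = 0)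

include hker in
open scoped Classical in
/-- From a witness for `U(A,F)` we get a witness for `U(A,∅)` with the same `T`-value. -/
lemma exists_empty_witness (A : ↥𝒜) (F : Finset ℕ) (f : C₀(Mrowka 𝒜, ℝ))
    (hf : ⇑f = Set.indicator (mrowkaNbhd A F) (1 : Mrowka 𝒜 → ℝ)) :
    ∃ g : C₀(Mrowka 𝒜, ℝ),
      ⇑g = Set.indicator (mrowkaNbhd A ∅) (1 : Mrowka 𝒜 → ℝ) ∧ T g = T f := by
  refine ⟨f + ∑ n ∈ F.filter (fun n => n ∈ (A : Set ℕ)), hfn 𝒜 n, ?_, ?_⟩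
  · rw [ZeroAtInftyContinuousMap.coe_add, c0_coe_sum, hf, indicator_decomp A F]
    congr 1
  · rw [map_add, map_sum, Finset.sum_eq_zero (fun n _ => hker n _ rfl), add_zero]


include hker in
open scoped Classical in
/-- From a witness for `U(A,∅)` we get a witness for `U(A,F)` with the same `T`-value. -/
lemma exists_F_witness (A : ↥𝒜) (F : Finset ℕ) (f : C₀(Mrowka 𝒜, ℝ))
    (hf : ⇑f = Set.indicator (mrowkaNbhd A ∅) (1 : Mrowka 𝒜 → ℝ)) :
    ∃ g : C₀(Mrowka 𝒜, ℝ),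
      ⇑g = Set.indicator (mrowkaNbhd A F) (1 : Mrowka 𝒜 → ℝ) ∧ T g = T f := by
  refine ⟨f - ∑ n ∈ F.filter (fun n => n ∈ (A : Set ℕ)), hfn 𝒜 n, ?_, ?_⟩
  · rw [ZeroAtInftyContinuousMap.coe_sub, c0_coe_sum, hf, indicator_decomp A F]
    exact add_sub_cancel_right _ _
  · rw [map_sub, map_sum, Finset.sum_eq_zero (fun n _ => hker n _ rfl), sub_zero]

include hker in
open scoped Classical in
lemma finite_S (had : ADFamily 𝒜) (k m : ℕ) :
    {A : ↥𝒜 | ∃ f : C₀(Mrowka 𝒜, ℝ),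
      ⇑f = Set.indicator (mrowkaNbhd A ∅) (1 : Mrowka 𝒜 → ℝ) ∧
      1 / (m + 1 : ℝ) ≤ |(T f : ℕ → ℝ) k|}.Finite := by
  by_contra hinf
  replace hinf : Set.Infinite _ := hinf
  obtain ⟨N, hN⟩ := exists_nat_gt (‖T‖ * (m + 1))
  obtain ⟨t, hts, htc⟩ := hinf.exists_subset_card_eq N
  -- choose witnesses
  have hwit : ∀ A : ↥𝒜, A ∈ t → ∃ f : C₀(Mrowka 𝒜, ℝ),
      ⇑f = Set.indicator (mrowkaNbhd A ∅) (1 : Mrowka 𝒜 → ℝ) ∧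
      1 / (m + 1 : ℝ) ≤ |(T f : ℕ → ℝ) k| := fun A hA => hts hA
  choose! f hf1 hf2 using hwit
  -- choose the separating finite sets
  have hFex : ∀ A : ↥𝒜, ∃ F : Finset ℕ, ∀ B : ↥𝒜, B ∈ t → B ≠ A →
      ((A : Set ℕ) ∩ (B : Set ℕ)) ⊆ (F : Set ℕ) := by
    intro A
    have hfin : (⋃ B ∈ (t.erase A), ((A : Set ℕ) ∩ (B : Set ℕ))).Finite := by
      refine Set.Finite.biUnion (t.erase A).finite_toSet ?_
      intro B hB
      simp only [Finset.coe_erase, Set.mem_diff, Set.mem_singleton_iff] at hB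
      exact had.2 A A.2 B B.2 (fun h => hB.2 (Subtype.ext h).symm)
    refine ⟨hfin.toFinset, fun B hB hBA => ?_⟩
    rw [Set.Finite.coe_toFinset]
    exact Set.subset_biUnion_of_mem (u := fun B : ↥𝒜 => (A : Set ℕ) ∩ (B : Set ℕ))
      (Finset.mem_erase.2 ⟨hBA, hB⟩)
  choose F hF using hFex
  -- replace witnesses by disjointly supported ones
  have hgex : ∀ A : ↥𝒜, A ∈ t → ∃ g : C₀(Mrowka 𝒜, ℝ),
      ⇑g = Set.indicator (mrowkaNbhd A (F A)) (1 : Mrowka 𝒜 → ℝ) ∧ T g = T (f A) :=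
    fun A hA => exists_F_witness T hker A (F A) (f A) (hf1 A hA)
  choose! g hg1 hg2 using hgex
  -- disjointness of supports
  have hdisj : ∀ A ∈ t, ∀ B ∈ t, A ≠ B → ∀ x : Mrowka 𝒜,
      x ∈ mrowkaNbhd A (F A) → x ∉ mrowkaNbhd B (F B) := by
    intro A hA B hB hAB x hxA hxB
    cases x with
    | inl n =>
      rcases mem_nbhd_inl.1 hxA with ⟨hnA, hnFA⟩
      rcases mem_nbhd_inl.1 hxB with ⟨hnB, -⟩
      exact hnFA (hF A B hB (Ne.symm hAB) ⟨hnA, hnB⟩)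
    | inr C =>
      erw [mem_nbhd_inr] at hxA hxB
      exact hAB (hxA ▸ hxB ▸ rfl)
  -- signs
  set ε : ↥𝒜 → ℝ := fun A => if 0 ≤ (T (f A) : ℕ → ℝ) k then 1 else -1 with hε
  have hεabs : ∀ A : ↥𝒜, ε A * (T (f A) : ℕ → ℝ) k = |(T (f A) : ℕ → ℝ) k| := by
    intro A
    by_cases h : 0 ≤ (T (f A) : ℕ → ℝ) k
    · simp [hε, h, abs_of_nonneg h]
    · simp [hε, h, abs_of_neg (lt_of_not_ge h)]
  set G : C₀(Mrowka 𝒜, ℝ) := ∑ A ∈ t, ε A • g A with hG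
  -- norm bound on G
  have hGnorm : ‖G‖ ≤ 1 := by
    rw [← ZeroAtInftyContinuousMap.norm_toBCF_eq_norm]
    refine (BoundedContinuousFunction.norm_le zero_le_one).2 fun x => ?_
    have hGx : G x = ∑ A ∈ t, ε A * Set.indicator (mrowkaNbhd A (F A)) (1 : Mrowka 𝒜 → ℝ) x := by
      rw [hG, c0_coe_sum, Finset.sum_apply]
      refine Finset.sum_congr rfl fun A hA => ?_
      rw [ZeroAtInftyContinuousMap.coe_smul, Pi.smul_apply, hg1 A hA, smul_eq_mul]
    show ‖G x‖ ≤ 1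
    rw [Real.norm_eq_abs, hGx]
    calc |∑ A ∈ t, ε A * Set.indicator (mrowkaNbhd A (F A)) (1 : Mrowka 𝒜 → ℝ) x|
        ≤ ∑ A ∈ t, |ε A * Set.indicator (mrowkaNbhd A (F A)) (1 : Mrowka 𝒜 → ℝ) x| :=
          Finset.abs_sum_le_sum_abs _ _
      _ = ∑ A ∈ t, Set.indicator (mrowkaNbhd A (F A)) (1 : Mrowka 𝒜 → ℝ) x := by
          refine Finset.sum_congr rfl fun A _ => ?_
          rw [abs_mul]
          have : |ε A| = 1 := by by_cases h : 0 ≤ (T (f A) : ℕ → ℝ) k <;> simp [hε, h]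
          rw [this, one_mul]
          exact abs_of_nonneg (Set.indicator_nonneg (fun _ _ => zero_le_one) x)
      _ ≤ 1 := by
          by_cases hx : ∃ A ∈ t, x ∈ mrowkaNbhd A (F A)
          · obtain ⟨A₀, hA₀t, hxA₀⟩ := hx
            rw [Finset.sum_eq_single_of_mem A₀ hA₀t]
            · rw [Set.indicator_of_mem hxA₀]; exact le_refl 1
            · intro B hB hBA
              exact Set.indicator_of_notMem (fun hxB => hdisj A₀ hA₀t B hB (Ne.symm hBA) x hxA₀ hxB) _
          · push_neg at hx
            rw [Finset.sum_eq_zero fun A hA => Set.indicator_of_notMem (hx A hA) _]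
            exact zero_le_one
  -- lower bound on (T G) k
  have hTGk : (N : ℝ) * (1 / (m + 1)) ≤ (T G : ℕ → ℝ) k := by
    have h1 : T G = ∑ A ∈ t, ε A • T (f A) := by
      rw [hG, map_sum]
      exact Finset.sum_congr rfl fun A hA => by rw [map_smul, hg2 A hA]
    have h2 : (T G : ℕ → ℝ) k = ∑ A ∈ t, ε A * (T (f A) : ℕ → ℝ) k := by
      rw [h1, lp.coeFn_sum, Finset.sum_apply]
      exact Finset.sum_congr rfl fun A _ => by rw [lp.coeFn_smul, Pi.smul_apply, smul_eq_mul]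
    rw [h2]
    calc (N : ℝ) * (1 / (m + 1)) = t.card • (1 / (m + 1) : ℝ) := by rw [htc]; simp [nsmul_eq_mul]
      _ ≤ ∑ A ∈ t, |(T (f A) : ℕ → ℝ) k| := Finset.card_nsmul_le_sum t _ _ (fun A hA => hf2 A hA)
      _ = ∑ A ∈ t, ε A * (T (f A) : ℕ → ℝ) k := by
          exact Finset.sum_congr rfl fun A _ => (hεabs A).symm
  -- upper bound
  have hup : (T G : ℕ → ℝ) k ≤ ‖T‖ := by
    calc (T G : ℕ → ℝ) k ≤ ‖(T G : ℕ → ℝ) k‖ := le_abs_self _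
      _ ≤ ‖T G‖ := lp.norm_apply_le_norm ENNReal.top_ne_zero (T G) k
      _ ≤ ‖T‖ * ‖G‖ := T.le_opNorm G
      _ ≤ ‖T‖ * 1 := mul_le_mul_of_nonneg_left hGnorm (norm_nonneg T)
      _ = ‖T‖ := mul_one _
  have hm1 : (0 : ℝ) < m + 1 := by positivity
  have : (N : ℝ) ≤ ‖T‖ * (m + 1) := by
    have := hTGk.trans hup
    rw [mul_one_div] at this
    calc (N : ℝ) = (N : ℝ) / (m + 1) * (m + 1) := by field_simp
      _ ≤ ‖T‖ * (m + 1) := mul_le_mul_of_nonneg_right this hm1.le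
  linarith


end MrowkaAux

open MrowkaAux in
theorem mrowka_kernel_theorem (𝒜 : Set (Set ℕ)) (had : ADFamily 𝒜) (hunc : ¬𝒜.Countable)
    (T : C₀(Mrowka 𝒜, ℝ) →L[ℝ] lp (fun _ : ℕ => ℝ) ⊤)
    (hker : ∀ (n : ℕ) (f : C₀(Mrowka 𝒜, ℝ)),
      ⇑f = Set.indicator {Sum.inl n} (1 : Mrowka 𝒜 → ℝ) → T f = 0) :
    ∃ 𝒜' ⊆ 𝒜, #𝒜' = #𝒜 ∧
      ∀ (A : ↥𝒜), (A : Set ℕ) ∈ 𝒜' → ∀ (F : Finset ℕ) (f : C₀(Mrowka 𝒜, ℝ)),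
        ⇑f = Set.indicator (mrowkaNbhd A F) (1 : Mrowka 𝒜 → ℝ) → T f = 0 := by
  classical
  set Bad : Set ↥𝒜 :=
    {A | ∃ f : C₀(Mrowka 𝒜, ℝ),
      ⇑f = Set.indicator (mrowkaNbhd A ∅) (1 : Mrowka 𝒜 → ℝ) ∧ T f ≠ 0} with hBad
  -- `Bad` is countable
  have hBadCount : Bad.Countable := by
    have hsub : Bad ⊆ ⋃ (k : ℕ) (m : ℕ),
        {A : ↥𝒜 | ∃ f : C₀(Mrowka 𝒜, ℝ),
          ⇑f = Set.indicator (mrowkaNbhd A ∅) (1 : Mrowka 𝒜 → ℝ) ∧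
          1 / (m + 1 : ℝ) ≤ |(T f : ℕ → ℝ) k|} := by
      rintro A ⟨f, hf, hTf⟩
      have h1 : ⇑(T f) ≠ 0 := fun h => hTf (lp.eq_zero_iff_coeFn_eq_zero.2 h)
      obtain ⟨k, hk⟩ := Function.ne_iff.1 h1
      have hk' : 0 < |(T f : ℕ → ℝ) k| := abs_pos.2 hk
      obtain ⟨m, hm⟩ := exists_nat_one_div_lt hk'
      exact Set.mem_iUnion.2 ⟨k, Set.mem_iUnion.2 ⟨m, ⟨f, hf, hm.le⟩⟩⟩
    exact Set.Countable.mono hsub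
      (Set.countable_iUnion fun k => Set.countable_iUnion fun m =>
        (finite_S T hker had k m).countable)
  have hImg : (Subtype.val '' Bad : Set (Set ℕ)).Countable := hBadCount.image _
  refine ⟨𝒜 \ (Subtype.val '' Bad), Set.diff_subset, ?_, ?_⟩
  · -- cardinality
    have hdiffeq : 𝒜 \ (Subtype.val '' Bad) = 𝒜 \ (𝒜 ∩ Subtype.val '' Bad) :=
      (Set.diff_self_inter).symm
    have hsum : #(𝒜 \ (𝒜 ∩ Subtype.val '' Bad) : Set (Set ℕ))
        + #(𝒜 ∩ Subtype.val '' Bad : Set (Set ℕ)) = #𝒜 :=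
      Cardinal.mk_diff_add_mk Set.inter_subset_left
    have huncount : ¬(𝒜 \ (Subtype.val '' Bad)).Countable := by
      intro hc
      apply hunc
      have : 𝒜 ⊆ (𝒜 \ (Subtype.val '' Bad)) ∪ (𝒜 ∩ Subtype.val '' Bad) := by
        intro x hx
        by_cases h : x ∈ Subtype.val '' Bad
        · exact Or.inr ⟨hx, h⟩
        · exact Or.inl ⟨hx, h⟩
      exact (hc.union (hImg.mono Set.inter_subset_right)).mono this
    have hbig : ℵ₀ ≤ #(𝒜 \ (Subtype.val '' Bad) : Set (Set ℕ)) := by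
      by_contra h
      exact huncount (Cardinal.le_aleph0_iff_set_countable.1 (le_of_not_ge h)) 
    refine le_antisymm (Cardinal.mk_le_mk_of_subset Set.diff_subset) ?_
    calc #𝒜 = #(𝒜 \ (𝒜 ∩ Subtype.val '' Bad) : Set (Set ℕ))
        + #(𝒜 ∩ Subtype.val '' Bad : Set (Set ℕ)) := hsum.symm
      _ ≤ #(𝒜 \ (Subtype.val '' Bad) : Set (Set ℕ))
          + #(𝒜 \ (Subtype.val '' Bad) : Set (Set ℕ)) := by
          rw [← hdiffeq]
          refine add_le_add le_rfl ?_
          exact le_trans ((Cardinal.le_aleph0_iff_set_countable).2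
            (hImg.mono Set.inter_subset_right)) hbig
      _ = #(𝒜 \ (Subtype.val '' Bad) : Set (Set ℕ)) := Cardinal.add_eq_self hbig
  · -- the kernel property
    intro A hA F f hf
    obtain ⟨g, hg, hTg⟩ := exists_empty_witness T hker A F f hf
    by_contra hTf
    exact hA.2 ⟨A, ⟨g, hg, fun h => hTf (hTg.symm.trans h)⟩, rfl⟩
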